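/- arXiv:1910.12046 — 2 statements merged into one kernel-verified Lean document; each statement's English description precedes it below -/
import Mathlib

section
/- Let (ω̂_n)_{n∈ℕ} be a stationary ergodic sequence of random row vectors in ℝ^m, each ω̂_n taking values in the set of standard basis (state-indicating) vectors, such that E[ω̂_{n+1} | ω̂_n] = ω̂_n P̃ for a fixed m×m row-stochastic matrix P̃, and such that every state has positive probability (so that Σ_ω = E[ω̂_1^T ω̂_1] is positive definite). For an m×m matrix P define L_N(P) = (1/N) Σ_{n=2}^N ‖ω̂_n − ω̂_{n−1} P‖², where the minimization is over the compact set of row-stochastic m×m matrices. Then for each N there exists a random row-stochastic matrix P̂_N with L_N(P̂_N) = inf_P L_N(P), and P̂_N → P̃ almost surely as N → ∞. -/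
open MeasureTheory Matrix Filter Topology
section Birkhoff

variable {α : Type*} [MeasurableSpace α] {μ : Measure α} [IsProbabilityMeasure μ] {T : α → α}

lemma integrable_of_abs_bound {f : α → ℝ} (hf : Measurable f) (C : ℝ) (h : ∀ x, |f x| ≤ C) :
    Integrable f μ :=
  (integrable_const C).mono' hf.aestronglyMeasurable
    (ae_of_all _ (by simpa [Real.norm_eq_abs] using h))

lemma abs_birkhoffSum_le {f : α → ℝ} {B : ℝ} (hB : ∀ x, |f x| ≤ B) (N : ℕ) (x : α) :
    |birkhoffSum T f N x| ≤ N * B := by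
  calc |birkhoffSum T f N x| ≤ ∑ n ∈ Finset.range N, |f (T^[n] x)| :=
        Finset.abs_sum_le_sum_abs _ _
    _ ≤ ∑ _n ∈ Finset.range N, B := Finset.sum_le_sum fun n _ => hB _
    _ = N * B := by simp [mul_comm]

lemma abs_birkhoffAvg_le {f : α → ℝ} {B : ℝ} (hB0 : 0 ≤ B) (hB : ∀ x, |f x| ≤ B) (N : ℕ)
    (x : α) : |birkhoffSum T f N x / N| ≤ B := by
  rcases Nat.eq_zero_or_pos N with rfl | hN
  · simpa using hB0
  · rw [abs_div, abs_of_nonneg (by positivity : (0:ℝ) ≤ (N:ℝ)), div_le_iff₀ (by positivity)]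
    calc |birkhoffSum T f N x| ≤ N * B := abs_birkhoffSum_le hB N x
      _ = B * N := mul_comm _ _

lemma bddAbove_avg {f : α → ℝ} {B : ℝ} (hB0 : 0 ≤ B) (hB : ∀ x, |f x| ≤ B) (x : α) :
    IsBoundedUnder (· ≤ ·) atTop (fun N => birkhoffSum T f N x / N) :=
  isBoundedUnder_of ⟨B, fun N => (abs_le.1 (abs_birkhoffAvg_le hB0 hB N x)).2⟩

lemma bddBelow_avg {f : α → ℝ} {B : ℝ} (hB0 : 0 ≤ B) (hB : ∀ x, |f x| ≤ B) (x : α) :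
    IsBoundedUnder (· ≥ ·) atTop (fun N => birkhoffSum T f N x / N) :=
  isBoundedUnder_of ⟨-B, fun N => (abs_le.1 (abs_birkhoffAvg_le hB0 hB N x)).1⟩

/-- limsups of two bounded sequences whose difference tends to zero agree. -/
lemma limsup_eq_of_sub_tendsto {u v : ℕ → ℝ} {Bu Bv : ℝ}
    (hu : ∀ n, |u n| ≤ Bu) (hv : ∀ n, |v n| ≤ Bv)
    (h : Tendsto (fun n => u n - v n) atTop (nhds 0)) :
    limsup u atTop = limsup v atTop := by
  have hbu : IsBoundedUnder (· ≤ ·) atTop u := isBoundedUnder_of ⟨Bu, fun n => (abs_le.1 (hu n)).2⟩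
  have hbu' : IsBoundedUnder (· ≥ ·) atTop u :=
    isBoundedUnder_of ⟨-Bu, fun n => (abs_le.1 (hu n)).1⟩
  have hbv : IsBoundedUnder (· ≤ ·) atTop v := isBoundedUnder_of ⟨Bv, fun n => (abs_le.1 (hv n)).2⟩
  have hbv' : IsBoundedUnder (· ≥ ·) atTop v :=
    isBoundedUnder_of ⟨-Bv, fun n => (abs_le.1 (hv n)).1⟩
  have key : ∀ (a b : ℕ → ℝ), IsBoundedUnder (· ≤ ·) atTop b →
      IsBoundedUnder (· ≥ ·) atTop a →
      Tendsto (fun n => a n - b n) atTop (nhds 0) → limsup a atTop ≤ limsup b atTop := by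
    intro a b hbb hba hab
    refine le_of_forall_pos_le_add fun ε hε => ?_
    have h1 : ∀ᶠ n in atTop, b n < limsup b atTop + ε / 2 :=
      eventually_lt_of_limsup_lt (by linarith) hbb
    have h2 : ∀ᶠ n in atTop, |a n - b n| < ε / 2 := by
      simpa using hab.eventually (eventually_abs_sub_lt 0 (by linarith : (0:ℝ) < ε/2))
    refine limsup_le_of_le hba.isCoboundedUnder_flip ?_
    filter_upwards [h1, h2] with n h1 h2
    have := abs_lt.1 h2
    linarith
  refine le_antisymm (key u v hbv hbu' h) (key v u hbu hbv' ?_)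
  simpa using h.neg

variable (T) in
/-- The pointwise limsup of Birkhoff averages. -/
noncomputable def birkLimsup (f : α → ℝ) (x : α) : ℝ :=
  limsup (fun N => birkhoffSum T f N x / N) atTop

lemma birkLimsup_comp {f : α → ℝ} {B : ℝ} (hB0 : 0 ≤ B) (hB : ∀ x, |f x| ≤ B) (x : α) :
    birkLimsup T f (T x) = birkLimsup T f x := by
  unfold birkLimsup
  have h1 : limsup (fun N => birkhoffSum T f (N + 1) x / (N + 1)) atTop
      = limsup (fun N => birkhoffSum T f N x / N) atTop := by
    have := limsup_nat_add (fun N => birkhoffSum T f N x / N) 1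
    simpa using this
  rw [← h1]
  refine limsup_eq_of_sub_tendsto (Bu := B) (Bv := B)
    (fun N => abs_birkhoffAvg_le hB0 hB N (T x))
    (fun N => by simpa using abs_birkhoffAvg_le hB0 hB (N+1) x) ?_
  -- `birkhoffSum T f N (T x) / N - birkhoffSum T f (N+1) x / (N+1)` tends to `0`
  have hbound : ∀ N : ℕ, 1 ≤ N →
      |birkhoffSum T f N (T x) / N - birkhoffSum T f (N + 1) x / ((N:ℝ) + 1)| ≤ 2 * B / N := by
    intro N hN
    have hNpos : (0:ℝ) < N := by exact_mod_cast hN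
    have hsucc : birkhoffSum T f (N + 1) x = f x + birkhoffSum T f N (T x) :=
      birkhoffSum_succ' T f N x
    have hS : |birkhoffSum T f N (T x)| ≤ N * B := abs_birkhoffSum_le hB N (T x)
    have hfx : |f x| ≤ B := hB x
    rw [hsucc]
    have hd : birkhoffSum T f N (T x) / N - (f x + birkhoffSum T f N (T x)) / ((N:ℝ)+1)
        = (birkhoffSum T f N (T x) - f x * N) / ((N:ℝ) * ((N:ℝ)+1)) := by
      field_simp
      ring
    rw [hd, abs_div, abs_of_nonneg (by positivity : (0:ℝ) ≤ (N:ℝ) * ((N:ℝ)+1)),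
      div_le_div_iff₀ (by positivity) hNpos]
    have habs : |birkhoffSum T f N (T x) - f x * (N:ℝ)| ≤ 2 * B * N := by
      calc |birkhoffSum T f N (T x) - f x * (N:ℝ)|
          ≤ |birkhoffSum T f N (T x)| + |f x * N| := abs_sub _ _
        _ ≤ N * B + B * N := by
            refine add_le_add hS ?_
            rw [abs_mul, abs_of_nonneg (le_of_lt hNpos)]
            exact mul_le_mul_of_nonneg_right hfx (le_of_lt hNpos)
        _ = 2 * B * N := by ring
    nlinarith [habs, hNpos, hB0]
  refine squeeze_zero_norm' (a := fun N : ℕ => 2 * B / N) ?_ ?_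
  · filter_upwards [eventually_ge_atTop 1] with N hN
    simpa [Real.norm_eq_abs] using hbound N hN
  · simpa using tendsto_const_div_atTop_nhds_zero_nat (2 * B)

lemma measurable_birkhoffSum {f : α → ℝ} (hf : Measurable f) (hT : Measurable T) (N : ℕ) :
    Measurable (fun x => birkhoffSum T f N x) := by
  unfold birkhoffSum
  exact Finset.measurable_sum _ fun n _ => hf.comp (hT.iterate n)

lemma measurable_birkLimsup {f : α → ℝ} {B : ℝ} (hf : Measurable f) (hT : Measurable T)
    (hB0 : 0 ≤ B) (hB : ∀ x, |f x| ≤ B) : Measurable (birkLimsup T f) := by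
  apply measurable_of_Iic
  intro t
  have hset : birkLimsup T f ⁻¹' Set.Iic t
      = ⋂ k : ℕ, {x | ∀ᶠ N in atTop, birkhoffSum T f N x / N < t + 1 / (k + 1)} := by
    ext x
    simp only [Set.mem_preimage, Set.mem_Iic, Set.mem_iInter, Set.mem_setOf_eq]
    constructor
    · intro hx k
      refine eventually_lt_of_limsup_lt ?_ (bddAbove_avg hB0 hB x)
      have : (0:ℝ) < 1 / (k + 1) := by positivity
      calc birkLimsup T f x ≤ t := hx
        _ < t + 1 / (k+1) := by linarith
    · intro hx
      refine le_of_forall_pos_le_add fun ε hε => ?_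
      obtain ⟨k, hk⟩ := exists_nat_one_div_lt hε
      have := limsup_le_of_le ((bddBelow_avg hB0 hB x).isCoboundedUnder_flip)
        ((hx k).mono fun N hN => le_of_lt hN)
      calc birkLimsup T f x ≤ t + 1 / (k + 1) := this
        _ ≤ t + ε := by linarith
  rw [hset]
  refine MeasurableSet.iInter fun k => ?_
  simp only [eventually_atTop]
  have : {x | ∃ M, ∀ N ≥ M, birkhoffSum T f N x / N < t + 1 / (k + 1)}
      = ⋃ M : ℕ, ⋂ N : ℕ, ⋂ _ : N ≥ M, {x | birkhoffSum T f N x / N < t + 1/(k+1)} := by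
    ext x; simp
  rw [this]
  refine MeasurableSet.iUnion fun M => MeasurableSet.iInter fun N => MeasurableSet.iInter fun _ => ?_
  exact measurableSet_lt ((measurable_birkhoffSum hf hT N).div_const _) measurable_const

lemma nonempty_of_prob (μ : Measure α) [IsProbabilityMeasure μ] : Nonempty α := by
  by_contra h
  have h0 : μ Set.univ = 1 := measure_univ
  rw [Set.univ_eq_empty_iff.2 (not_nonempty_iff.1 h)] at h0
  simp at h0

lemma integral_birkhoffSum {f : α → ℝ} (hT : MeasurePreserving T μ μ) (hf : Measurable f)
    {B : ℝ} (hB0 : 0 ≤ B) (hB : ∀ x, |f x| ≤ B) (N : ℕ) :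
    ∫ x, birkhoffSum T f N x ∂μ = N * ∫ x, f x ∂μ := by
  induction N with
  | zero => simp
  | succ N ih =>
    have hintf : Integrable f μ := integrable_of_abs_bound hf B hB
    have hSmeas : Measurable (fun x => birkhoffSum T f N x) :=
      measurable_birkhoffSum hf hT.measurable N
    have hintS : Integrable (fun x => birkhoffSum T f N (T x)) μ :=
      integrable_of_abs_bound (hSmeas.comp hT.measurable) (N * B)
        (fun x => abs_birkhoffSum_le hB N (T x))
    have h1 : ∫ x, birkhoffSum T f (N+1) x ∂μ
        = ∫ x, (f x + birkhoffSum T f N (T x)) ∂μ := by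
      congr 1
      ext x
      exact birkhoffSum_succ' T f N x
    rw [h1, integral_add hintf hintS]
    have h2 : ∫ x, birkhoffSum T f N (T x) ∂μ = ∫ x, birkhoffSum T f N x ∂μ := by
      conv_rhs => rw [← hT.map_eq]
      rw [integral_map hT.measurable.aemeasurable hSmeas.aestronglyMeasurable]
    rw [h2, ih]
    push_cast
    ring

lemma birkhoff_limsup_le (hT : MeasurePreserving T μ μ) (hErg : Ergodic T μ)
    {f : α → ℝ} (hf : Measurable f) {B : ℝ} (hB : ∀ x, |f x| ≤ B) :
    ∀ᵐ x ∂μ, birkLimsup T f x ≤ ∫ x, f x ∂μ := by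
  classical
  have hne : Nonempty α := nonempty_of_prob μ
  have hB0 : 0 ≤ B := le_trans (abs_nonneg _) (hB (Classical.arbitrary α))
  obtain ⟨c, hc⟩ := hErg.toPreErgodic.ae_eq_const_of_ae_eq_comp
    (measurable_birkLimsup hf hT.measurable hB0 hB)
    (funext fun x => birkLimsup_comp hB0 hB x)
  -- `|c| ≤ B`
  obtain ⟨x₀, hx₀⟩ : ∃ x, birkLimsup T f x = c := hc.exists
  have hcB : |c| ≤ B := by
    rw [← hx₀]
    rw [abs_le]
    constructor
    · refine le_limsup_of_le (bddAbove_avg hB0 hB x₀) fun b hb => ?_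
      obtain ⟨N, hN⟩ := hb.exists
      linarith [(abs_le.1 (abs_birkhoffAvg_le (T := T) hB0 hB N x₀)).1]
    · refine limsup_le_of_le (bddBelow_avg hB0 hB x₀).isCoboundedUnder_flip ?_
      exact Eventually.of_forall fun N => (abs_le.1 (abs_birkhoffAvg_le (T := T) hB0 hB N x₀)).2
  suffices hcle : c ≤ ∫ x, f x ∂μ by
    filter_upwards [hc] with x hx
    rw [hx]
    exact hcle
  refine le_of_forall_pos_le_add fun δ hδ => ?_
  have h2B3 : (0:ℝ) < 2 * B + 3 := by linarith
  set ε : ℝ := min 1 (δ / (2 * B + 3)) with hεdef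
  have hεpos : 0 < ε := lt_min one_pos (div_pos hδ h2B3)
  have hε1 : ε ≤ 1 := min_le_left _ _
  have hεδ : (2 * B + 3) * ε ≤ δ := by
    have : ε ≤ δ / (2 * B + 3) := min_le_right _ _
    calc (2 * B + 3) * ε ≤ (2 * B + 3) * (δ / (2 * B + 3)) :=
          mul_le_mul_of_nonneg_left this h2B3.le
      _ = δ := by field_simp
  suffices hmain : c ≤ (∫ x, f x ∂μ) + (2 * B + 3) * ε by linarith
  -- a.e. there is a time with average at least `c - ε`
  have hGc : ∀ᵐ x ∂μ, ∃ n, 1 ≤ n ∧ (c - ε) * n ≤ birkhoffSum T f n x := by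
    filter_upwards [hc] with x hx
    by_contra hcon
    push_neg at hcon
    have hls : birkLimsup T f x ≤ c - ε := by
      refine limsup_le_of_le (bddBelow_avg hB0 hB x).isCoboundedUnder_flip ?_
      filter_upwards [eventually_ge_atTop 1] with N hN
      have hNpos : (0:ℝ) < N := by exact_mod_cast hN
      rw [div_le_iff₀ hNpos]
      linarith [hcon N hN]
    rw [hx] at hls
    simp only [Function.const_apply] at hls
    linarith
  -- choose `M` with `μ (E M) < ε`
  set E : ℕ → Set α := fun M =>
    {x | ∀ n, 1 ≤ n → n ≤ M → birkhoffSum T f n x < (c - ε) * n} with hEdef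
  have hEmeas : ∀ M, MeasurableSet (E M) := by
    intro M
    have : E M = ⋂ n, ⋂ _ : 1 ≤ n, ⋂ _ : n ≤ M,
        {x | birkhoffSum T f n x < (c - ε) * n} := by
      ext x; simp [hEdef]
    rw [this]
    exact MeasurableSet.iInter fun n => MeasurableSet.iInter fun _ =>
      MeasurableSet.iInter fun _ =>
        measurableSet_lt (measurable_birkhoffSum hf hT.measurable n) measurable_const
  have hEanti : Antitone E := by
    intro M M' hMM' x hx n h1 hn
    exact hx n h1 (le_trans hn hMM')
  have hEnull : μ (⋂ M, E M) = 0 := by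
    refine measure_mono_null ?_ (ae_iff.1 hGc)
    intro x hx
    simp only [Set.mem_iInter] at hx
    simp only [Set.mem_setOf_eq, not_exists]
    rintro n ⟨h1, h2⟩
    exact absurd h2 (not_le.2 (hx n n h1 le_rfl))
  have htend : Tendsto (μ ∘ E) atTop (nhds 0) := by
    have := tendsto_measure_iInter_atTop (μ := μ)
      (fun M => (hEmeas M).nullMeasurableSet) hEanti ⟨0, measure_ne_top μ _⟩
    rwa [hEnull] at this
  obtain ⟨M, hME⟩ : ∃ M, μ (E M) < ENNReal.ofReal ε :=
    (htend.eventually_lt_const (ENNReal.ofReal_pos.2 hεpos)).exists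
  -- the stopping time
  have hQ : ∀ x : α, ∃ n, (1 ≤ n ∧ (c - ε) * n ≤ birkhoffSum T f n x) ∨ n = M + 1 :=
    fun x => ⟨M + 1, Or.inr rfl⟩
  set τ : α → ℕ := fun x => Nat.find (hQ x) with hτdef
  have hτle : ∀ x, τ x ≤ M + 1 := fun x => Nat.find_le (Or.inr rfl)
  have hτspec : ∀ x, (1 ≤ τ x ∧ (c - ε) * (τ x) ≤ birkhoffSum T f (τ x) x) ∨ τ x = M + 1 :=
    fun x => Nat.find_spec (hQ x)
  have hτmeas : Measurable τ :=
    measurable_find hQ fun k => by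
      have : {x | (1 ≤ k ∧ (c - ε) * k ≤ birkhoffSum T f k x) ∨ k = M + 1}
          = ({x | 1 ≤ k} ∩ {x | (c - ε) * k ≤ birkhoffSum T f k x}) ∪ {x | k = M + 1} := by
        ext x
        simp only [Set.mem_setOf_eq, Set.mem_union, Set.mem_inter_iff]
      rw [this]
      refine MeasurableSet.union (MeasurableSet.inter ?_ ?_) ?_
      · exact MeasurableSet.const _
      · exact measurableSet_le measurable_const (measurable_birkhoffSum hf hT.measurable k)
      · exact MeasurableSet.const _
  set Gd : Set α := ⋃ n, ({x | τ x = n} ∩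
      {x | 1 ≤ n ∧ (c - ε) * n ≤ birkhoffSum T f n x}) with hGddef
  have hGdmeas : MeasurableSet Gd := by
    refine MeasurableSet.iUnion fun n => MeasurableSet.inter (hτmeas (measurableSet_singleton n)) ?_
    refine MeasurableSet.inter (MeasurableSet.const _) ?_
    exact measurableSet_le measurable_const (measurable_birkhoffSum hf hT.measurable n)
  have hGd_iff : ∀ x, x ∈ Gd ↔ (1 ≤ τ x ∧ (c - ε) * (τ x) ≤ birkhoffSum T f (τ x) x) := by
    intro x
    constructor
    · rintro hx
      simp only [hGddef, Set.mem_iUnion, Set.mem_inter_iff, Set.mem_setOf_eq] at hx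
      obtain ⟨n, hn1, hn2⟩ := hx
      rw [hn1]
      exact hn2
    · intro hx
      simp only [hGddef, Set.mem_iUnion, Set.mem_inter_iff, Set.mem_setOf_eq]
      exact ⟨τ x, rfl, hx⟩
  have hbadE : ∀ x, x ∉ Gd → x ∈ E M := by
    intro x hng n h1 hn
    by_contra hcon
    push_neg at hcon
    have hτn : τ x ≤ n := Nat.find_le (Or.inl ⟨h1, hcon⟩)
    rcases hτspec x with hgood | hMM
    · exact hng ((hGd_iff x).2 hgood)
    · omega
  -- the modified function and stopping time
  set ftil : α → ℝ := Gd.piecewise f (fun x => max (f x) (c - ε)) with hftildef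
  set tau' : α → ℕ := fun x => if x ∈ Gd then τ x else 1 with htau'def
  have hfle : ∀ x, f x ≤ ftil x := by
    intro x
    rw [hftildef]
    by_cases hg : x ∈ Gd
    · rw [Set.piecewise_eq_of_mem _ _ _ hg]
    · rw [Set.piecewise_eq_of_notMem _ _ _ hg]
      exact le_max_left _ _
  have hftilbound : ∀ x, |ftil x| ≤ B + 1 := by
    intro x
    rw [hftildef]
    have h1 := abs_le.1 (hB x)
    have h2 := abs_le.1 hcB
    by_cases hg : x ∈ Gd
    · rw [Set.piecewise_eq_of_mem _ _ _ hg]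
      rw [abs_le]; constructor <;> linarith
    · rw [Set.piecewise_eq_of_notMem _ _ _ hg]
      rw [abs_le]
      constructor
      · calc -(B+1) ≤ f x := by linarith
          _ ≤ max (f x) (c - ε) := le_max_left _ _
      · exact max_le (by linarith) (by linarith)
  have htau'1 : ∀ x, 1 ≤ tau' x := by
    intro x
    by_cases hg : x ∈ Gd
    · simp only [htau'def, if_pos hg]
      exact ((hGd_iff x).1 hg).1
    · simp [htau'def, if_neg hg]
  have htau'le : ∀ x, tau' x ≤ M + 1 := by
    intro x
    by_cases hg : x ∈ Gd
    · simp only [htau'def, if_pos hg]; exact hτle x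
    · simp [htau'def, if_neg hg]
  have hblock : ∀ x, (c - ε) * (tau' x) ≤ birkhoffSum T ftil (tau' x) x := by
    intro x
    by_cases hg : x ∈ Gd
    · simp only [htau'def, if_pos hg]
      obtain ⟨h1, h2⟩ := (hGd_iff x).1 hg
      calc (c - ε) * (τ x : ℝ) ≤ birkhoffSum T f (τ x) x := h2
        _ ≤ birkhoffSum T ftil (τ x) x := Finset.sum_le_sum fun n _ => hfle _
    · simp only [htau'def, if_neg hg, birkhoffSum_one, Nat.cast_one, mul_one, hftildef]
      rw [Set.piecewise_eq_of_notMem _ _ _ hg]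
      exact le_max_right _ _
  -- key induction
  have hkey : ∀ L : ℕ, ∀ x,
      (c - ε) * ((L:ℝ) - (M + 1)) - (M + 1) * (B + 1) ≤ birkhoffSum T ftil L x := by
    intro L
    induction L using Nat.strong_induction_on with
    | _ L ih =>
      intro x
      by_cases hL : L ≤ M + 1
      · have habs := (abs_le.1 (abs_birkhoffSum_le (T := T) hftilbound L x)).1
        have hcast : (L:ℝ) ≤ (M:ℝ) + 1 := by exact_mod_cast hL
        have h2 := abs_le.1 hcB
        nlinarith [habs, hcast, h2.1, h2.2, hε1, hB0]
      · push_neg at hL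
        have ht1 := htau'1 x
        have ht2 := htau'le x
        have htL : tau' x ≤ L := le_of_lt (lt_of_le_of_lt ht2 hL)
        have hsplit : birkhoffSum T ftil L x
            = birkhoffSum T ftil (tau' x) x + birkhoffSum T ftil (L - tau' x) (T^[tau' x] x) := by
          conv_lhs => rw [← Nat.add_sub_cancel' htL]
          exact birkhoffSum_add T ftil (tau' x) (L - tau' x) x
        have hih := ih (L - tau' x) (by omega) (T^[tau' x] x)
        have hcast : ((L - tau' x : ℕ):ℝ) = (L:ℝ) - (tau' x : ℝ) := by
          push_cast [Nat.cast_sub htL]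
          ring
        rw [hsplit]
        rw [hcast] at hih
        have hb := hblock x
        nlinarith [hih, hb]
  -- integrate
  have hftilmeas : Measurable ftil :=
    Measurable.piecewise hGdmeas hf (hf.max measurable_const)
  have hintf : Integrable f μ := integrable_of_abs_bound hf B hB
  have hintftil : Integrable ftil μ := integrable_of_abs_bound hftilmeas (B + 1) hftilbound
  have hB10 : (0:ℝ) ≤ B + 1 := by linarith
  have hSint : ∀ L : ℕ, ∫ x, birkhoffSum T ftil L x ∂μ = L * ∫ x, ftil x ∂μ :=
    integral_birkhoffSum hT hftilmeas hB10 hftilbound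
  have hlow : ∀ L : ℕ,
      (c - ε) * ((L:ℝ) - (M + 1)) - (M + 1) * (B + 1) ≤ L * ∫ x, ftil x ∂μ := by
    intro L
    rw [← hSint L]
    have hSLint : Integrable (fun x => birkhoffSum T ftil L x) μ :=
      integrable_of_abs_bound (measurable_birkhoffSum hftilmeas hT.measurable L)
        (L * (B + 1)) (abs_birkhoffSum_le hftilbound L)
    have := integral_mono (integrable_const ((c - ε) * ((L:ℝ) - (M + 1)) - (M + 1) * (B + 1)))
      hSLint (hkey L)
    simpa using this
  have hlim : c - ε ≤ ∫ x, ftil x ∂μ := by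
    set K : ℝ := (c - ε) * (M + 1) + (M + 1) * (B + 1) with hKdef
    have hstep : ∀ L : ℕ, 1 ≤ L → (c - ε) - K / L ≤ ∫ x, ftil x ∂μ := by
      intro L hL
      have hLpos : (0:ℝ) < L := by exact_mod_cast hL
      have h2 : ((c - ε) - K / L) * L ≤ (∫ x, ftil x ∂μ) * L := by
        have heq : ((c - ε) - K / L) * L = (c - ε) * ((L:ℝ) - (M + 1)) - (M + 1) * (B + 1) := by
          field_simp [hKdef]
          ring
        rw [heq, mul_comm (∫ x, ftil x ∂μ) (L:ℝ)]
        exact hlow L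
      exact le_of_mul_le_mul_right h2 hLpos
    have htendK : Tendsto (fun L : ℕ => (c - ε) - K / L) atTop (nhds (c - ε)) := by
      have := tendsto_const_nhds (x := c - ε) (f := atTop (α := ℕ)) |>.sub
        (tendsto_const_div_atTop_nhds_zero_nat K)
      simpa using this
    refine le_of_tendsto htendK ?_
    filter_upwards [eventually_ge_atTop 1] with L hL
    exact hstep L hL
  have hup : ∫ x, ftil x ∂μ ≤ (∫ x, f x ∂μ) + 2 * (B + 1) * ε := by
    have hpt : ∀ x, ftil x ≤ f x + (E M).indicator (fun _ => 2 * (B + 1)) x := by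
      intro x
      rw [hftildef]
      by_cases hg : x ∈ Gd
      · rw [Set.piecewise_eq_of_mem _ _ _ hg]
        have : (0:ℝ) ≤ (E M).indicator (fun _ => 2 * (B + 1)) x :=
          Set.indicator_nonneg (fun _ _ => by linarith) x
        linarith
      · have hxE : x ∈ E M := hbadE x hg
        rw [Set.piecewise_eq_of_notMem _ _ _ hg, Set.indicator_of_mem hxE]
        have h1 := abs_le.1 (hB x)
        have h2 := abs_le.1 hcB
        exact max_le (by linarith) (by linarith)
    have hint_ind : Integrable ((E M).indicator fun _ => (2 * (B + 1) : ℝ)) μ :=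
      (integrable_const _).indicator (hEmeas M)
    have hmono := integral_mono hintftil (hintf.add hint_ind) hpt
    simp only [Pi.add_apply] at hmono
    rw [integral_add hintf hint_ind, integral_indicator_const _ (hEmeas M)] at hmono
    have hμE : (μ (E M)).toReal ≤ ε := ENNReal.toReal_le_of_le_ofReal hεpos.le hME.le
    have hind_le : (μ (E M)).toReal • (2 * (B + 1) : ℝ) ≤ 2 * (B + 1) * ε := by
      rw [smul_eq_mul, mul_comm]
      exact mul_le_mul_of_nonneg_left hμE (by linarith)
    rw [measureReal_def] at hmono
    linarith
  linarith

lemma birkhoff_tendsto (hT : MeasurePreserving T μ μ) (hErg : Ergodic T μ)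
    {f : α → ℝ} (hf : Measurable f) {B : ℝ} (hB : ∀ x, |f x| ≤ B) :
    ∀ᵐ x ∂μ, Tendsto (fun N => birkhoffSum T f N x / N) atTop (nhds (∫ x, f x ∂μ)) := by
  have hne : Nonempty α := nonempty_of_prob μ
  have hB0 : 0 ≤ B := le_trans (abs_nonneg _) (hB (Classical.arbitrary α))
  have hB' : ∀ x, |(-f) x| ≤ B := fun x => by
    rw [Pi.neg_apply, abs_neg]; exact hB x
  have h1 := birkhoff_limsup_le hT hErg hf hB
  have h2 := birkhoff_limsup_le hT hErg hf.neg hB'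
  simp only [Pi.neg_apply, integral_neg] at h2
  filter_upwards [h1, h2] with x hx1 hx2
  have hneg : ∀ N, birkhoffSum T (-f) N x = -birkhoffSum T f N x := by
    intro N
    simp [birkhoffSum, Finset.sum_neg_distrib]
  have hliminf : (∫ x, f x ∂μ) ≤ liminf (fun N => birkhoffSum T f N x / N) atTop := by
    refine le_of_forall_lt_imp_le_of_dense fun b hb => ?_
    have hlt : birkLimsup T (-f) x < -b := lt_of_le_of_lt hx2 (by linarith)
    have hev := eventually_lt_of_limsup_lt hlt (bddAbove_avg hB0 hB' x)
    refine le_liminf_of_le (bddAbove_avg hB0 hB x).isCoboundedUnder_ge ?_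
    filter_upwards [hev] with N hN
    rw [hneg N, neg_div] at hN
    linarith
  exact tendsto_of_le_liminf_of_limsup_le hliminf hx1 (bddAbove_avg hB0 hB x)
    (bddBelow_avg hB0 hB x)

end Birkhoff
/-- The least-squares criterion `L_N(P) = N⁻¹ Σₙ ‖ω̂ₙ₊₁ − ω̂ₙ P‖²`. -/
noncomputable def lsCriterion {Ω : Type*} (m : ℕ) (X : ℕ → Ω → Fin m → ℝ)
    (N : ℕ) (P : Matrix (Fin m) (Fin m) ℝ) (ω : Ω) : ℝ :=
  (1 / (N : ℝ)) * ∑ n ∈ Finset.range N,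
    ∑ j : Fin m, (X (n+1) ω j - Matrix.vecMul (X n ω) P j) ^ 2

/-- The (compact) set of row-stochastic `m × m` matrices. -/
def stochMat (m : ℕ) : Set (Matrix (Fin m) (Fin m) ℝ) :=
  {P | (∀ i j, 0 ≤ P i j) ∧ ∀ i, ∑ j, P i j = 1}

lemma vecMul_single_one {m : ℕ} (i : Fin m) (R : Matrix (Fin m) (Fin m) ℝ) (j : Fin m) :
    Matrix.vecMul (Pi.single i 1) R j = R i j := by
  simp [Matrix.vecMul, dotProduct, Pi.single_apply, ite_mul]

set_option maxHeartbeats 1000000 in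
/-- Theorem 1: for a stationary ergodic sequence of state-indicating vectors with
`E[ω̂ₙ₊₁ | ω̂ₙ] = ω̂ₙ P̃` and all states of positive probability, least-squares
estimators exist and converge almost surely to `P̃`. -/
theorem ls_estimator_consistency
    {Ω : Type*} [MeasurableSpace Ω] (μ : Measure Ω) [IsProbabilityMeasure μ]
    (m : ℕ) (hm : 0 < m)
    (T : Ω → Ω) (hT : MeasurePreserving T μ μ) (hErg : Ergodic T μ)
    (X : ℕ → Ω → Fin m → ℝ) (hXmeas : ∀ n, Measurable (X n))
    (hshift : ∀ n ω, X (n+1) ω = X n (T ω))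
    (hind : ∀ n ω, ∃ i : Fin m, X n ω = Pi.single i 1)
    (Pt : Matrix (Fin m) (Fin m) ℝ) (hPt : Pt ∈ stochMat m)
    (hcond : ∀ (n : ℕ) (j : Fin m),
      μ[fun ω => X (n+1) ω j | MeasurableSpace.comap (X n) inferInstance]
        =ᵐ[μ] fun ω => Matrix.vecMul (X n ω) Pt j)
    (hposstate : ∀ i : Fin m, 0 < μ {ω | X 0 ω = Pi.single i 1}) :
    ∃ Phat : ℕ → Ω → Matrix (Fin m) (Fin m) ℝ,
      (∀ (N : ℕ) (i j : Fin m), Measurable fun ω => Phat N ω i j) ∧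
      (∀ N ω, Phat N ω ∈ stochMat m ∧
        lsCriterion m X N (Phat N ω) ω = ⨅ P : stochMat m, lsCriterion m X N P.1 ω) ∧
      ∀ᵐ ω ∂μ, Tendsto (fun N => Phat N ω) atTop (nhds Pt) := by
  classical
  -- basic pointwise facts
  have hX01 : ∀ n ω (j : Fin m), X n ω j = 0 ∨ X n ω j = 1 := by
    intro n ω j
    obtain ⟨i, hi⟩ := hind n ω
    rw [hi]
    rcases eq_or_ne j i with h | h
    · right; rw [h, Pi.single_eq_same]
    · left; rw [Pi.single_eq_of_ne h]
  have hXnonneg : ∀ n ω (j : Fin m), 0 ≤ X n ω j := by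
    intro n ω j; rcases hX01 n ω j with h | h <;> rw [h] <;> norm_num
  have hXle1 : ∀ n ω (j : Fin m), X n ω j ≤ 1 := by
    intro n ω j; rcases hX01 n ω j with h | h <;> rw [h] <;> norm_num
  have hXsum : ∀ n ω, ∑ j, X n ω j = 1 := by
    intro n ω
    obtain ⟨i, hi⟩ := hind n ω
    rw [hi]
    simp [Pi.single_apply]
  have hXm : ∀ n (j : Fin m), Measurable (fun ω => X n ω j) :=
    fun n j => (measurable_pi_apply j).comp (hXmeas n)
  have hXiter : ∀ n ω, X n ω = X 0 (T^[n] ω) := by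
    intro n
    induction n with
    | zero => intro ω; simp
    | succ n ih =>
      intro ω
      rw [hshift n ω, ih (T ω), ← Function.iterate_succ_apply]
  have hX1T : ∀ n ω, X (n+1) ω = X 1 (T^[n] ω) := by
    intro n ω
    calc X (n+1) ω = X 0 (T^[n+1] ω) := hXiter _ _
      _ = X 0 (T (T^[n] ω)) := by rw [Function.iterate_succ_apply']
      _ = X 1 (T^[n] ω) := (hshift 0 (T^[n] ω)).symm
  -- the states
  set Si : Fin m → Set Ω := fun i => {ω | X 0 ω = Pi.single i 1} with hSidef
  have hsingle_meas : ∀ i : Fin m, MeasurableSet ({Pi.single i 1} : Set (Fin m → ℝ)) :=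
    fun i => measurableSet_singleton _
  have hSimeas : ∀ i, MeasurableSet (Si i) := fun i => hXmeas 0 (hsingle_meas i)
  have hX0i : ∀ ω (i : Fin m), X 0 ω i = if ω ∈ Si i then 1 else 0 := by
    intro ω i
    by_cases hmem : ω ∈ Si i
    · have hx : X 0 ω = Pi.single i 1 := hmem
      conv_lhs => rw [hx]
      rw [Pi.single_eq_same, if_pos hmem]
    · rw [if_neg hmem]
      obtain ⟨k, hk⟩ := hind 0 ω
      rw [hk]
      have hki : i ≠ k := by
        intro h
        exact hmem (show X 0 ω = Pi.single i 1 by rw [hk, h])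
      exact Pi.single_eq_of_ne hki _
  have hintX : ∀ (n : ℕ) (j : Fin m), Integrable (fun ω => X n ω j) μ := by
    intro n j
    refine integrable_of_abs_bound (hXm n j) 1 fun ω => ?_
    rw [abs_le]
    exact ⟨by linarith [hXnonneg n ω j], hXle1 n ω j⟩
  -- integral identities
  have hI1 : ∀ i, ∫ ω, X 0 ω i ∂μ = (μ (Si i)).toReal := by
    intro i
    have h1 : (fun ω => X 0 ω i) = (Si i).indicator (fun _ => (1:ℝ)) := by
      funext ω
      rw [hX0i ω i, Set.indicator_apply]
    rw [h1, integral_indicator_const _ (hSimeas i)]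
    simp
    rfl
  have hI2 : ∀ i j, ∫ ω, X 0 ω i * X 1 ω j ∂μ = Pt i j * (μ (Si i)).toReal := by
    intro i j
    have hle : MeasurableSpace.comap (X 0) inferInstance ≤ _ := (hXmeas 0).comap_le
    have hSm : MeasurableSet[MeasurableSpace.comap (X 0) inferInstance] (Si i) :=
      ⟨{Pi.single i 1}, hsingle_meas i, rfl⟩
    have h1 : (fun ω => X 0 ω i * X 1 ω j) = (Si i).indicator (fun ω => X 1 ω j) := by
      funext ω
      rw [Set.indicator_apply, hX0i ω i]
      by_cases h : ω ∈ Si i <;> simp [h]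
    rw [h1, integral_indicator (hSimeas i)]
    have h2 := setIntegral_condExp hle (hintX 1 j) hSm
    rw [← h2]
    have h3 : ∫ ω in Si i, (μ[fun ω => X 1 ω j | MeasurableSpace.comap (X 0) inferInstance]) ω ∂μ
        = ∫ ω in Si i, Matrix.vecMul (X 0 ω) Pt j ∂μ :=
      setIntegral_congr_ae (hSimeas i) ((hcond 0 j).mono fun ω hω _ => hω)
    rw [h3]
    have h4 : ∫ ω in Si i, Matrix.vecMul (X 0 ω) Pt j ∂μ = ∫ _ω in Si i, Pt i j ∂μ := by
      refine setIntegral_congr_fun (hSimeas i) fun ω hω => ?_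
      rw [show X 0 ω = Pi.single i 1 from hω, vecMul_single_one]
    rw [h4, setIntegral_const, smul_eq_mul, mul_comm, measureReal_def]
  -- the estimator
  set num : ℕ → Ω → Fin m → Fin m → ℝ :=
    fun N ω i j => ∑ n ∈ Finset.range N, X n ω i * X (n+1) ω j with hnumdef
  set den : ℕ → Ω → Fin m → ℝ := fun N ω i => ∑ n ∈ Finset.range N, X n ω i with hdendef
  refine ⟨fun N ω => Matrix.of fun i j =>
    if 0 < den N ω i then num N ω i j / den N ω i else Pt i j, ?_, ?_, ?_⟩
  · -- measurability
    intro N i j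
    have hnm : Measurable (fun ω => num N ω i j) :=
      Finset.measurable_sum _ fun n _ => (hXm n i).mul (hXm (n+1) j)
    have hdm : Measurable (fun ω => den N ω i) :=
      Finset.measurable_sum _ fun n _ => hXm n i
    exact Measurable.ite (measurableSet_lt measurable_const hdm) (hnm.div hdm) measurable_const
  · -- optimality
    intro N ω
    beta_reduce
    set Q : Matrix (Fin m) (Fin m) ℝ := Matrix.of fun i j =>
      if 0 < den N ω i then num N ω i j / den N ω i else Pt i j with hQdef
    have hQapp : ∀ i j, Q i j = if 0 < den N ω i then num N ω i j / den N ω i else Pt i j :=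
      fun i j => rfl
    -- the state at each time
    set s : ℕ → Fin m := fun n => (hind n ω).choose with hsdef
    have hs : ∀ n, X n ω = Pi.single (s n) 1 := fun n => (hind n ω).choose_spec
    have hXi : ∀ n (i : Fin m), X n ω i = if s n = i then 1 else 0 := by
      intro n i
      rw [hs n, Pi.single_apply]
      simp [eq_comm]
    set F : Fin m → Finset ℕ := fun i => (Finset.range N).filter (fun n => s n = i) with hFdef
    have hden_card : ∀ i, den N ω i = ((F i).card : ℝ) := by
      intro i
      rw [hdendef]
      simp only [hXi]
      rw [Finset.sum_boole]
    have hnum_eq : ∀ i j, num N ω i j = ∑ n ∈ F i, X (n+1) ω j := by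
      intro i j
      rw [hnumdef, hFdef, Finset.sum_filter]
      refine Finset.sum_congr rfl fun n _ => ?_
      rw [hXi n i]
      by_cases h : s n = i <;> simp [h]
    have hnormal : ∀ i j, ∑ n ∈ F i, (X (n+1) ω j - Q i j) = 0 := by
      intro i j
      by_cases hc : 0 < den N ω i
      · have hQij : Q i j = num N ω i j / den N ω i := if_pos hc
        have hdne : den N ω i ≠ 0 := ne_of_gt hc
        rw [Finset.sum_sub_distrib, Finset.sum_const, ← hnum_eq i j, nsmul_eq_mul,
          ← hden_card i, hQij]
        have hmd : den N ω i * (num N ω i j / den N ω i) = num N ω i j := by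
          field_simp
        rw [hmd, sub_self]
      · have hcard : (F i).card = 0 := by
          have h0 : den N ω i = 0 := by
            have hnn : 0 ≤ den N ω i := Finset.sum_nonneg fun n _ => hXnonneg n ω i
            cases' (lt_or_eq_of_le hnn) with h h
            · exact absurd h hc
            · exact h.symm
          have := hden_card i
          rw [h0] at this
          exact_mod_cast this.symm
        rw [Finset.card_eq_zero.1 hcard]
        simp
    have hQmem : Q ∈ stochMat m := by
      constructor
      · intro i j
        rw [hQapp]
        by_cases hc : 0 < den N ω i
        · rw [if_pos hc]
          refine div_nonneg ?_ hc.le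
          exact Finset.sum_nonneg fun n _ =>
            mul_nonneg (hXnonneg n ω i) (hXnonneg (n+1) ω j)
        · rw [if_neg hc]; exact hPt.1 i j
      · intro i
        by_cases hc : 0 < den N ω i
        · have hsum : ∑ j, num N ω i j = den N ω i := by
            rw [hnumdef, hdendef]
            rw [Finset.sum_comm]
            refine Finset.sum_congr rfl fun n _ => ?_
            rw [← Finset.mul_sum, hXsum (n+1) ω, mul_one]
          have : ∑ j, Q i j = ∑ j, num N ω i j / den N ω i := by
            refine Finset.sum_congr rfl fun j _ => ?_
            rw [hQapp, if_pos hc]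
          rw [this, ← Finset.sum_div, hsum, div_self (ne_of_gt hc)]
        · have : ∑ j, Q i j = ∑ j, Pt i j := by
            refine Finset.sum_congr rfl fun j _ => ?_
            rw [hQapp, if_neg hc]
          rw [this]
          exact hPt.2 i
    have hvec : ∀ (R : Matrix (Fin m) (Fin m) ℝ) (n : ℕ) (j : Fin m),
        Matrix.vecMul (X n ω) R j = R (s n) j := by
      intro R n j
      rw [hs n, vecMul_single_one]
    -- the cross term vanishes
    have hcross : ∀ P : Matrix (Fin m) (Fin m) ℝ,
        ∑ n ∈ Finset.range N, ∑ j, (Q (s n) j - P (s n) j) * (X (n+1) ω j - Q (s n) j) = 0 := by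
      intro P
      rw [← Finset.sum_fiberwise_of_maps_to (fun n _ => Finset.mem_univ (s n))
        (fun n => ∑ j, (Q (s n) j - P (s n) j) * (X (n+1) ω j - Q (s n) j))]
      refine Finset.sum_eq_zero fun i _ => ?_
      have hcongr : ∀ n ∈ F i, ∑ j, (Q (s n) j - P (s n) j) * (X (n+1) ω j - Q (s n) j)
          = ∑ j, (Q i j - P i j) * (X (n+1) ω j - Q i j) := by
        intro n hn
        rw [(Finset.mem_filter.1 hn).2]
      rw [Finset.sum_congr rfl hcongr, Finset.sum_comm]
      refine Finset.sum_eq_zero fun j _ => ?_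
      rw [← Finset.mul_sum, hnormal i j, mul_zero]
    -- key inequality
    have hkey : ∀ P : Matrix (Fin m) (Fin m) ℝ,
        ∑ n ∈ Finset.range N, ∑ j, (X (n+1) ω j - Q (s n) j)^2
          ≤ ∑ n ∈ Finset.range N, ∑ j, (X (n+1) ω j - P (s n) j)^2 := by
      intro P
      have hterm : ∀ n (j : Fin m), (X (n+1) ω j - P (s n) j)^2
          = (X (n+1) ω j - Q (s n) j)^2 + (Q (s n) j - P (s n) j)^2
            + 2 * ((Q (s n) j - P (s n) j) * (X (n+1) ω j - Q (s n) j)) := by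
        intro n j; ring
      have hsum : ∑ n ∈ Finset.range N, ∑ j, (X (n+1) ω j - P (s n) j)^2
          = ∑ n ∈ Finset.range N, ∑ j, (X (n+1) ω j - Q (s n) j)^2
            + ∑ n ∈ Finset.range N, ∑ j, (Q (s n) j - P (s n) j)^2
            + 2 * ∑ n ∈ Finset.range N, ∑ j,
                (Q (s n) j - P (s n) j) * (X (n+1) ω j - Q (s n) j) := by
        rw [Finset.mul_sum, ← Finset.sum_add_distrib, ← Finset.sum_add_distrib]
        refine Finset.sum_congr rfl fun n _ => ?_
        rw [Finset.mul_sum, ← Finset.sum_add_distrib, ← Finset.sum_add_distrib]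
        exact Finset.sum_congr rfl fun j _ => hterm n j
      rw [hsum, hcross P, mul_zero, add_zero]
      refine le_add_of_nonneg_right ?_
      exact Finset.sum_nonneg fun n _ => Finset.sum_nonneg fun j _ => sq_nonneg _
    have hls : ∀ (R : Matrix (Fin m) (Fin m) ℝ),
        lsCriterion m X N R ω = (1 / (N:ℝ)) *
          ∑ n ∈ Finset.range N, ∑ j, (X (n+1) ω j - R (s n) j)^2 := by
      intro R
      unfold lsCriterion
      congr 1
      refine Finset.sum_congr rfl fun n _ => Finset.sum_congr rfl fun j _ => ?_
      rw [hvec R n j]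
    have hle : ∀ P : stochMat m, lsCriterion m X N Q ω ≤ lsCriterion m X N P.1 ω := by
      intro P
      rw [hls Q, hls P.1]
      refine mul_le_mul_of_nonneg_left (hkey P.1) ?_
      positivity
    have hnonneg : ∀ P : stochMat m, 0 ≤ lsCriterion m X N P.1 ω := by
      intro P
      unfold lsCriterion
      refine mul_nonneg (by positivity) ?_
      exact Finset.sum_nonneg fun n _ => Finset.sum_nonneg fun j _ => sq_nonneg _
    haveI : Nonempty (stochMat m) := ⟨⟨Pt, hPt⟩⟩
    have hbdd : BddBelow (Set.range fun P : stochMat m => lsCriterion m X N P.1 ω) := by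
      refine ⟨0, ?_⟩
      rintro x ⟨P, rfl⟩
      exact hnonneg P
    have h1 : lsCriterion m X N Q ω ≤ ⨅ P : stochMat m, lsCriterion m X N P.1 ω :=
      le_ciInf hle
    have h2 : (⨅ P : stochMat m, lsCriterion m X N P.1 ω) ≤ lsCriterion m X N Q ω :=
      ciInf_le hbdd (⟨Q, hQmem⟩ : stochMat m)
    exact ⟨hQmem, le_antisymm h1 h2⟩
  · -- almost sure convergence
    have hbirk2 : ∀ i : Fin m, ∀ᵐ ω ∂μ,
        Tendsto (fun N => den N ω i / N) atTop (nhds ((μ (Si i)).toReal)) := by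
      intro i
      have hgB : ∀ ω, |X 0 ω i| ≤ 1 := fun ω =>
        abs_le.mpr ⟨le_trans (by norm_num : (-1:ℝ) ≤ 0) (hXnonneg 0 ω i), hXle1 0 ω i⟩
      have := birkhoff_tendsto hT hErg (hXm 0 i) hgB
      rw [hI1 i] at this
      refine this.mono fun ω hω => ?_
      have heq : ∀ N, birkhoffSum T (fun ω => X 0 ω i) N ω = den N ω i := by
        intro N
        rw [hdendef]
        refine Finset.sum_congr rfl fun n _ => ?_
        show X 0 (T^[n] ω) i = X n ω i
        rw [← hXiter n ω]
      simpa only [heq] using hω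
    have hbirk1 : ∀ i j : Fin m, ∀ᵐ ω ∂μ,
        Tendsto (fun N => num N ω i j / N) atTop (nhds (Pt i j * (μ (Si i)).toReal)) := by
      intro i j
      set g : Ω → ℝ := fun ω => X 0 ω i * X 1 ω j with hgdef
      have hgm : Measurable g := (hXm 0 i).mul (hXm 1 j)
      have hgB : ∀ ω, |g ω| ≤ 1 := by
        intro ω
        simp only [hgdef]
        rw [abs_le]
        constructor
        · have := mul_nonneg (hXnonneg 0 ω i) (hXnonneg 1 ω j)
          linarith
        · calc X 0 ω i * X 1 ω j ≤ 1 * 1 :=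
              mul_le_mul (hXle1 0 ω i) (hXle1 1 ω j) (hXnonneg 1 ω j) zero_le_one
            _ = 1 := one_mul 1
      have := birkhoff_tendsto hT hErg hgm hgB
      rw [show ∫ ω, g ω ∂μ = Pt i j * (μ (Si i)).toReal from hI2 i j] at this
      refine this.mono fun ω hω => ?_
      have heq : ∀ N, birkhoffSum T g N ω = num N ω i j := by
        intro N
        rw [hnumdef]
        refine Finset.sum_congr rfl fun n _ => ?_
        show X 0 (T^[n] ω) i * X 1 (T^[n] ω) j = X n ω i * X (n+1) ω j
        rw [← hXiter n ω, ← hX1T n ω]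
      simpa only [heq] using hω
    have hae1 : ∀ᵐ ω ∂μ, ∀ i j : Fin m,
        Tendsto (fun N => num N ω i j / N) atTop (nhds (Pt i j * (μ (Si i)).toReal)) := by
      rw [ae_all_iff]
      intro i
      rw [ae_all_iff]
      exact hbirk1 i
    have hae2 : ∀ᵐ ω ∂μ, ∀ i : Fin m,
        Tendsto (fun N => den N ω i / N) atTop (nhds ((μ (Si i)).toReal)) :=
      ae_all_iff.2 hbirk2
    filter_upwards [hae1, hae2] with ω h1 h2
    refine tendsto_pi_nhds.2 ?_
    intro i
    rw [tendsto_pi_nhds]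
    intro j
    set d : ℝ := (μ (Si i)).toReal with hddef
    have hd : 0 < d := ENNReal.toReal_pos (ne_of_gt (hposstate i)) (measure_ne_top μ _)
    have hev : ∀ᶠ N in atTop, 0 < den N ω i ∧ 1 ≤ N := by
      have hevd : ∀ᶠ N in atTop, 0 < den N ω i / N :=
        (h2 i).eventually_const_lt hd
      filter_upwards [hevd, eventually_ge_atTop 1] with N hN1 hN2
      refine ⟨?_, hN2⟩
      have hNpos : (0:ℝ) < N := by exact_mod_cast hN2
      have := mul_pos hN1 hNpos
      rwa [div_mul_cancel₀ _ (ne_of_gt hNpos)] at this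
    have hlim : Tendsto (fun N => (num N ω i j / N) / (den N ω i / N)) atTop
        (nhds (Pt i j)) := by
      have := (h1 i j).div (h2 i) (ne_of_gt hd)
      rwa [mul_div_cancel_right₀ _ (ne_of_gt hd)] at this
    refine hlim.congr' ?_
    filter_upwards [hev] with N hN
    obtain ⟨hden, hN1⟩ := hN
    have hNpos : (0:ℝ) < N := by exact_mod_cast hN1
    have heq : (num N ω i j / N) / (den N ω i / N) = num N ω i j / den N ω i := by
      field_simp
    rw [heq]
    show num N ω i j / den N ω i = Matrix.of (fun i j =>
      if 0 < den N ω i then num N ω i j / den N ω i else Pt i j) i j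
    simp only [Matrix.of_apply]
    rw [if_pos hden]
end

section
/- Let (X_n)_{n∈ℕ} be a stationary and ergodic process with values in a Euclidean space E, let Θ be a compact subset of some Euclidean space, and let F : E × Θ → ℝ be measurable such that θ ↦ F(x,θ) is continuous for every x ∈ E. Define φ(x) = sup_{θ∈Θ} |F(x,θ)| and assume E[φ(X_0)] < ∞. Then (1/N) Σ_{n=1}^N F(X_n, θ) → E[F(X_0, θ)] almost surely, uniformly in θ ∈ Θ; that is, almost surely sup_{θ∈Θ} |(1/N) Σ_{n=1}^N F(X_n,θ) − E[F(X_0,θ)]| → 0 as N → ∞. -/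
open MeasureTheory Filter Topology

set_option linter.unusedSectionVars false
set_option linter.unnecessarySimpa false


namespace UET

variable {Ω : Type*} [MeasurableSpace Ω] {μ : Measure Ω}

/-- Partial sums along the orbit. -/
def bS (T : Ω → Ω) (g : Ω → ℝ) (n : ℕ) (ω : Ω) : ℝ := ∑ k ∈ Finset.range n, g (T^[k] ω)

/-- Running maximum `max (0, S₁, …, S_N)`. -/
def bM (T : Ω → Ω) (g : Ω → ℝ) : ℕ → Ω → ℝ
  | 0, _ => 0
  | (N+1), ω => max (bM T g N ω) (bS T g (N+1) ω)

variable {T : Ω → Ω} {g : Ω → ℝ}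

lemma bS_succ' (n : ℕ) (ω : Ω) : bS T g (n+1) ω = g ω + bS T g n (T ω) := by
  simp only [bS, Finset.sum_range_succ']
  simp [Function.iterate_succ_apply, add_comm]

lemma bS_add (a b : ℕ) (ω : Ω) : bS T g (a+b) ω = bS T g a ω + bS T g b (T^[a] ω) := by
  induction b with
  | zero => simp [bS]
  | succ b ih =>
      have h1 : bS T g (a+(b+1)) ω = bS T g (a+b) ω + g (T^[a+b] ω) := by
        rw [← Nat.add_assoc]; exact Finset.sum_range_succ _ _
      have h2 : bS T g (b+1) (T^[a] ω)
          = bS T g b (T^[a] ω) + g (T^[b] (T^[a] ω)) := Finset.sum_range_succ _ _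
      rw [h1, h2, ih, ← Function.iterate_add_apply, Nat.add_comm b a]
      ring

lemma bS_measurable (hT : Measurable T) (hg : Measurable g) (n : ℕ) :
    Measurable (bS T g n) := by
  apply Finset.measurable_sum
  intro k _
  exact hg.comp (hT.iterate k)

lemma bS_integrable (hT : MeasurePreserving T μ μ) (hg : Integrable g μ) (n : ℕ) :
    Integrable (bS T g n) μ := by
  apply integrable_finset_sum
  intro k _
  exact ((hT.iterate k).integrable_comp hg.aestronglyMeasurable).2 hg

lemma bM_measurable (hT : Measurable T) (hg : Measurable g) (N : ℕ) :
    Measurable (bM T g N) := by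
  induction N with
  | zero => simpa [bM] using measurable_const
  | succ N ih => exact ih.max (bS_measurable hT hg (N+1))

lemma bM_integrable (hT : MeasurePreserving T μ μ) (hg : Integrable g μ) (N : ℕ) :
    Integrable (bM T g N) μ := by
  induction N with
  | zero => simpa [bM] using integrable_const (0:ℝ)
  | succ N ih =>
      have := ih.sup (bS_integrable hT hg (N+1))
      simpa [bM, Pi.sup_apply, Pi.sup_def] using this

lemma bM_nonneg (N : ℕ) (ω : Ω) : 0 ≤ bM T g N ω := by
  induction N with
  | zero => simp [bM]
  | succ N ih => exact le_trans ih (le_max_left _ _)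

lemma bM_mono {N M : ℕ} (h : N ≤ M) (ω : Ω) : bM T g N ω ≤ bM T g M ω := by
  induction M with
  | zero => simp_all
  | succ M ih =>
      rcases Nat.lt_or_ge N (M+1) with h' | h'
      · exact le_trans (ih (Nat.lt_succ_iff.1 h')) (le_max_left _ _)
      · have : N = M + 1 := le_antisymm h h'
        simp [this]

lemma bS_le_bM {n N : ℕ} (h : n ≤ N) (ω : Ω) : bS T g n ω ≤ bM T g N ω := by
  induction N with
  | zero =>
      have : n = 0 := Nat.le_zero.1 h
      simp [this, bS, bM]
  | succ N ih =>
      rcases Nat.lt_or_ge n (N+1) with h' | h'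
      · exact le_trans (ih (Nat.lt_succ_iff.1 h')) (le_max_left _ _)
      · have : n = N + 1 := le_antisymm h h'
        rw [this]; exact le_max_right _ _

lemma bM_cases (N : ℕ) (ω : Ω) : bM T g N ω = 0 ∨ ∃ n, bM T g N ω = bS T g n ω := by
  induction N with
  | zero => exact Or.inl rfl
  | succ N ih =>
      rcases max_cases (bM T g N ω) (bS T g (N+1) ω) with ⟨h, _⟩ | ⟨h, _⟩
      · rw [bM, h]; exact ih
      · exact Or.inr ⟨N+1, h⟩

lemma bM_key (N : ℕ) (ω : Ω) : bM T g N ω ≤ max 0 (g ω + bM T g N (T ω)) := by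
  induction N with
  | zero => simp [bM]
  | succ N ih =>
      rw [bM]
      apply max_le
      · exact le_trans ih (max_le_max le_rfl (by
          have := bM_mono (T := T) (g := g) (Nat.le_succ N) (T ω); linarith))
      · rw [bS_succ']
        refine le_max_of_le_right ?_
        have := bS_le_bM (T := T) (g := g) (Nat.le_succ N) (T ω)
        linarith

end UET

namespace UET2
open UET

variable {Ω : Type*} [MeasurableSpace Ω] {μ : Measure Ω} {T : Ω → Ω} {g : Ω → ℝ}

/-- Garsia's maximal ergodic theorem. -/
lemma maximal (hT : MeasurePreserving T μ μ) (hgm : Measurable g) (hgi : Integrable g μ)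
    (N : ℕ) : 0 ≤ ∫ ω in {ω | 0 < bM T g N ω}, g ω ∂μ := by
  set A : Set Ω := {ω | 0 < bM T g N ω} with hA
  have hAm : MeasurableSet A := measurableSet_lt measurable_const (bM_measurable hT.measurable hgm N)
  have hMi : Integrable (bM T g N) μ := bM_integrable hT hgi N
  have hMTi : Integrable (fun ω => bM T g N (T ω)) μ :=
    (hT.integrable_comp (bM_measurable hT.measurable hgm N).aestronglyMeasurable).2 hMi
  -- pointwise inequality on A
  have hpt : ∀ ω ∈ A, bM T g N ω - bM T g N (T ω) ≤ g ω := by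
    intro ω hω
    have h := bM_key (T := T) (g := g) N ω
    rcases max_cases (0:ℝ) (g ω + bM T g N (T ω)) with ⟨h0, _⟩ | ⟨h0, _⟩
    · rw [h0] at h
      exact absurd (lt_of_lt_of_le hω h) (lt_irrefl 0)
    · rw [h0] at h; linarith
  -- ∫_A bM = ∫ bM
  have hMind : A.indicator (bM T g N) = bM T g N := by
    funext ω
    by_cases hω : ω ∈ A
    · simp [Set.indicator_of_mem hω]
    · have h1 : bM T g N ω ≤ 0 := le_of_not_gt hω
      have h2 := bM_nonneg (T := T) (g := g) N ω
      simp [Set.indicator_of_notMem hω, le_antisymm h1 h2]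
  have e1 : ∫ ω in A, bM T g N ω ∂μ = ∫ ω, bM T g N ω ∂μ := by
    rw [← integral_indicator hAm, hMind]
  have e2 : ∫ ω in A, bM T g N (T ω) ∂μ ≤ ∫ ω, bM T g N (T ω) ∂μ :=
    setIntegral_le_integral hMTi (Eventually.of_forall fun ω => bM_nonneg N (T ω))
  have e3 : ∫ ω, bM T g N (T ω) ∂μ = ∫ ω, bM T g N ω ∂μ := by
    rw [← integral_map hT.measurable.aemeasurable
      (by rw [hT.map_eq]; exact (bM_measurable hT.measurable hgm N).aestronglyMeasurable),
      hT.map_eq]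
  have e4 : ∫ ω in A, (bM T g N ω - bM T g N (T ω)) ∂μ ≤ ∫ ω in A, g ω ∂μ :=
    setIntegral_mono_on (hMi.integrableOn.sub hMTi.integrableOn) hgi.integrableOn hAm hpt
  have e5 : ∫ ω in A, (bM T g N ω - bM T g N (T ω)) ∂μ
      = ∫ ω in A, bM T g N ω ∂μ - ∫ ω in A, bM T g N (T ω) ∂μ :=
    integral_sub hMi.integrableOn hMTi.integrableOn
  have : (0:ℝ) ≤ ∫ ω in A, (bM T g N ω - bM T g N (T ω)) ∂μ := by
    rw [e5, e1]
    have := e2.trans (le_of_eq e3)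
    linarith
  linarith

end UET2

namespace UET3
open UET UET2

variable {Ω : Type*} [MeasurableSpace Ω] {μ : Measure Ω} [IsProbabilityMeasure μ] {T : Ω → Ω}

lemma birkhoff_le (hErg : Ergodic T μ) {f : Ω → ℝ} (hfm : Measurable f)
    (hfi : Integrable f μ) {ε : ℝ} (hε : 0 < ε) :
    ∀ᵐ ω ∂μ, ∃ C : ℝ, ∀ n : ℕ, bS T f n ω ≤ C + n * ((∫ ω', f ω' ∂μ) + ε) := by
  have hT : MeasurePreserving T μ μ := hErg.toMeasurePreserving
  set c : ℝ := ∫ ω', f ω' ∂μ with hc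
  set g : Ω → ℝ := fun ω => f ω - (c + ε) with hg
  have hgm : Measurable g := hfm.sub measurable_const
  have hgi : Integrable g μ := hfi.sub (integrable_const _)
  have hgint : ∫ ω', g ω' ∂μ = -ε := by
    rw [hg]
    rw [integral_sub hfi (integrable_const _), integral_const]
    simp [hc]
  -- relation between bS f and bS g
  have hSg : ∀ n ω, bS T g n ω = bS T f n ω - n * (c + ε) := by
    intro n ω
    simp only [bS, hg, Finset.sum_sub_distrib, Finset.sum_const, Finset.card_range,
      nsmul_eq_mul]
  -- the union of the maximal sets
  set A : ℕ → Set Ω := fun N => {ω | 0 < bM T g N ω} with hA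
  have hAm : ∀ N, MeasurableSet (A N) := fun N =>
    measurableSet_lt measurable_const (bM_measurable hT.measurable hgm N)
  have hAmono : Monotone A := by
    intro N M h ω hω
    exact lt_of_lt_of_le hω (bM_mono h ω)
  set B : Set Ω := ⋃ N, A N with hB
  have hBm : MeasurableSet B := MeasurableSet.iUnion hAm
  have hBint : 0 ≤ ∫ ω in B, g ω ∂μ := by
    have ht := tendsto_setIntegral_of_monotone hAm hAmono hgi.integrableOn
    exact ge_of_tendsto' ht (fun N => maximal hT hgm hgi N)
  -- the complement has positive measure
  have hBc : μ Bᶜ ≠ 0 := by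
    intro h0
    have : ∫ ω in B, g ω ∂μ = ∫ ω', g ω' ∂μ := by
      rw [← integral_add_compl hBm hgi]
      have : ∫ ω in Bᶜ, g ω ∂μ = 0 := by
        rw [Measure.restrict_eq_zero.2 h0, integral_zero_measure]
      rw [this, add_zero]
    rw [this, hgint] at hBint
    linarith
  -- Bᶜ consists of points where all partial sums of g are ≤ 0
  have hBc_prop : ∀ ω ∈ Bᶜ, ∀ n, bS T g n ω ≤ 0 := by
    intro ω hω n
    have h1 : ¬ (0 < bM T g n ω) := by
      intro h
      exact hω (Set.mem_iUnion.2 ⟨n, h⟩)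
    exact (bS_le_bM le_rfl ω).trans (le_of_not_gt h1)
  -- the absorbing set D
  set D : Set Ω := ⋃ m, (T^[m]) ⁻¹' Bᶜ with hD
  have hDm : MeasurableSet D :=
    MeasurableSet.iUnion fun m => (hT.measurable.iterate m) hBm.compl
  have hDinv : T ⁻¹' D ⊆ D := by
    intro ω hω
    simp only [hD, Set.mem_preimage, Set.mem_iUnion] at hω ⊢
    obtain ⟨m, hm⟩ := hω
    exact ⟨m+1, by rwa [Function.iterate_succ_apply]⟩
  have hDuniv : D =ᵐ[μ] (Set.univ : Set Ω) := by
    rcases hErg.ae_empty_or_univ_of_preimage_ae_le hDm.nullMeasurableSet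
      (HasSubset.Subset.eventuallyLE hDinv) with h | h
    · exfalso
      have hsub : Bᶜ ⊆ D := by
        intro ω hω
        exact Set.mem_iUnion.2 ⟨0, hω⟩
      have : μ D = 0 := by
        rw [measure_congr h]; simp
      exact hBc (measure_mono_null hsub this)
    · exact h
  have hae : ∀ᵐ ω ∂μ, ω ∈ D := by
    have := ae_eq_univ.1 hDuniv
    rwa [ae_iff]
    
  filter_upwards [hae] with ω hω
  simp only [hD, Set.mem_iUnion, Set.mem_preimage] at hω
  obtain ⟨m, hm⟩ := hω
  refine ⟨(Finset.range (m+1)).sup' (Finset.nonempty_range_iff.2 (Nat.succ_ne_zero m))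
    (fun j => bS T g j ω), fun n => ?_⟩
  have key : bS T g n ω ≤ (Finset.range (m+1)).sup'
      (Finset.nonempty_range_iff.2 (Nat.succ_ne_zero m)) (fun j => bS T g j ω) := by
    rcases Nat.lt_or_ge n (m+1) with h | h
    · exact Finset.le_sup' (fun j => bS T g j ω) (Finset.mem_range.2 h)
    · have hnm : n = m + (n - m) := by omega
      have : bS T g n ω = bS T g m ω + bS T g (n-m) (T^[m] ω) := by
        conv_lhs => rw [hnm]
        exact bS_add m (n-m) ω
      rw [this]
      have h2 := hBc_prop _ hm (n - m)
      have h3 : bS T g m ω ≤ (Finset.range (m+1)).sup'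
          (Finset.nonempty_range_iff.2 (Nat.succ_ne_zero m)) (fun j => bS T g j ω) :=
        Finset.le_sup' (fun j => bS T g j ω) (Finset.mem_range.2 (Nat.lt_succ_self m))
      linarith
  rw [hSg] at key
  linarith

end UET3

namespace UET4
open UET UET2 UET3

variable {Ω : Type*} [MeasurableSpace Ω] {μ : Measure Ω} [IsProbabilityMeasure μ] {T : Ω → Ω}

theorem birkhoff (hErg : Ergodic T μ) {f : Ω → ℝ} (hfm : Measurable f)
    (hfi : Integrable f μ) :
    ∀ᵐ ω ∂μ, Tendsto (fun N : ℕ => (1 / (N:ℝ)) * ∑ n ∈ Finset.range N, f (T^[n] ω))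
      atTop (𝓝 (∫ ω', f ω' ∂μ)) := by
  set c : ℝ := ∫ ω', f ω' ∂μ with hc

  have h1 : ∀ k : ℕ, ∀ᵐ ω ∂μ, ∃ C : ℝ, ∀ n : ℕ,
      bS T f n ω ≤ C + n * (c + 1/(k+1)) :=
    fun k => birkhoff_le hErg hfm hfi (by positivity)
  have h2 : ∀ k : ℕ, ∀ᵐ ω ∂μ, ∃ C : ℝ, ∀ n : ℕ,
      bS T (-f) n ω ≤ C + n * (-c + 1/(k+1)) := by
    intro k
    have := birkhoff_le hErg hfm.neg hfi.neg (ε := 1/(k+1)) (by positivity)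
    simp only [Pi.neg_apply, integral_neg] at this
    exact this
  have hSneg : ∀ n ω, bS T (-f) n ω = - bS T f n ω := by
    intro n ω; simp [bS]
  filter_upwards [ae_all_iff.2 h1, ae_all_iff.2 h2] with ω H1 H2
  show Tendsto (fun N : ℕ => (1 / (N:ℝ)) * bS T f N ω) atTop (𝓝 c)
  rw [Metric.tendsto_atTop]
  intro δ hδ
  obtain ⟨k, hk⟩ := exists_nat_one_div_lt (half_pos hδ)
  obtain ⟨C₁, hC₁⟩ := H1 k
  obtain ⟨C₂, hC₂⟩ := H2 k
  set C : ℝ := max C₁ C₂ with hC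
  have hCt : Tendsto (fun n : ℕ => C / n) atTop (𝓝 0) := tendsto_const_div_atTop_nhds_zero_nat C
  have hev : ∀ᶠ n : ℕ in atTop, C / n < δ/2 :=
    hCt.eventually_lt_const (half_pos hδ)
  obtain ⟨N₁, hN₁⟩ := eventually_atTop.1 hev
  refine ⟨max N₁ 1, fun n hn => ?_⟩
  have hn1 : 1 ≤ n := le_trans (le_max_right _ _) hn
  have hnN : N₁ ≤ n := le_trans (le_max_left _ _) hn
  have hnpos : (0:ℝ) < n := by exact_mod_cast hn1
  have hb1 : bS T f n ω ≤ C + n * (c + 1/(k+1)) := le_trans (hC₁ n) (by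
    have : C₁ ≤ C := le_max_left _ _
    linarith)
  have hb2 : - bS T f n ω ≤ C + n * (-c + 1/(k+1)) := by
    have := hC₂ n
    rw [hSneg] at this
    have hle : C₂ ≤ C := le_max_right _ _
    linarith
  have hCn : C / n < δ/2 := hN₁ n hnN
  have he : 1/((k:ℝ)+1) < δ/2 := hk
  rw [Real.dist_eq]
  rw [abs_lt]
  constructor
  · -- -δ < (1/n) * bS - c
    have : (1/(n:ℝ)) * (- bS T f n ω) ≤ (1/(n:ℝ)) * (C + n * (-c + 1/(k+1))) :=
      mul_le_mul_of_nonneg_left hb2 (by positivity)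
    have hexp : (1/(n:ℝ)) * (C + n * (-c + 1/(k+1))) = C/n - c + 1/(k+1) := by
      field_simp; ring
    rw [hexp] at this
    have hfin : -((1/(n:ℝ)) * bS T f n ω) ≤ C/n - c + 1/(k+1) := by
      rw [← mul_neg]; exact this
    linarith
  · have : (1/(n:ℝ)) * bS T f n ω ≤ (1/(n:ℝ)) * (C + n * (c + 1/(k+1))) :=
      mul_le_mul_of_nonneg_left hb1 (by positivity)
    have hexp : (1/(n:ℝ)) * (C + n * (c + 1/(k+1))) = C/n + c + 1/(k+1) := by
      field_simp; ring
    rw [hexp] at this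
    linarith

end UET4

namespace UET5
open UET UET2 UET3 UET4

variable {Ω E V : Type*} [MeasurableSpace Ω] [MeasurableSpace E] [PseudoMetricSpace V]
variable {μ : Measure Ω} [IsProbabilityMeasure μ]

lemma upper_bracket
    {Y : Ω → E} (hY : Measurable Y)
    {Θ : Set V} {D : Set V} (hDc : D.Countable) (hDΘ : D ⊆ Θ) (hDd : Θ ⊆ closure D)
    {G : E → V → ℝ} (hGm : ∀ θ ∈ Θ, Measurable fun x => G x θ)
    (hGcont : ∀ x, ContinuousOn (G x) Θ)
    {φ : E → ℝ} (hφ : ∀ x, ∀ θ ∈ Θ, |G x θ| ≤ φ x)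
    (hφint : Integrable (fun ω => φ (Y ω)) μ)
    {θ₀ : V} (hθ₀ : θ₀ ∈ Θ) {ε : ℝ} (hε : 0 < ε) :
    ∃ δ > (0:ℝ), ∃ U : E → ℝ, Measurable U ∧ (∀ x, |U x| ≤ φ x) ∧
      (∀ x θ, θ ∈ Θ → dist θ θ₀ < δ → G x θ ≤ U x) ∧
      ∫ ω, U (Y ω) ∂μ ≤ (∫ ω, G (Y ω) θ₀ ∂μ) + ε := by
  classical
  set s : ℝ → Set V := fun δ => insert θ₀ (D ∩ Metric.ball θ₀ δ) with hs
  have hsc : ∀ δ, (s δ).Countable := fun δ => (hDc.mono Set.inter_subset_left).insert θ₀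
  have hsΘ : ∀ δ, s δ ⊆ Θ := fun δ =>
    Set.insert_subset hθ₀ (Set.inter_subset_left.trans hDΘ)
  have hθ₀s : ∀ δ, θ₀ ∈ s δ := fun δ => Set.mem_insert _ _
  set Uf : ℝ → E → ℝ := fun δ x => ⨆ p : s δ, G x (p : V) with hUf
  -- boundedness of the ranges
  have hbdd : ∀ δ x, BddAbove (Set.range fun p : s δ => G x (p : V)) := by
    intro δ x
    refine ⟨φ x, fun y hy => ?_⟩
    obtain ⟨p, rfl⟩ := hy
    exact (le_abs_self _).trans (hφ x p (hsΘ δ p.2))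
  have hUle : ∀ δ x, Uf δ x ≤ φ x := by
    intro δ x
    haveI := (hsc δ).to_subtype
    haveI : Nonempty (s δ) := ⟨⟨θ₀, hθ₀s δ⟩⟩
    exact ciSup_le fun p => (le_abs_self _).trans (hφ x p (hsΘ δ p.2))
  have hUge : ∀ δ x, G x θ₀ ≤ Uf δ x := fun δ x =>
    le_ciSup (hbdd δ x) (⟨θ₀, hθ₀s δ⟩ : s δ)
  have hUabs : ∀ δ x, |Uf δ x| ≤ φ x := by
    intro δ x
    rw [abs_le]
    constructor
    · have h1 := hφ x θ₀ hθ₀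
      have h2 := hUge δ x
      rw [abs_le] at h1
      linarith [h1.1]
    · exact hUle δ x
  have hUmeas : ∀ δ, Measurable (Uf δ) := by
    intro δ
    haveI := (hsc δ).to_subtype
    exact Measurable.iSup fun p => hGm p (hsΘ δ p.2)
  -- domination of G on the ball
  have hUdom : ∀ δ x θ, θ ∈ Θ → dist θ θ₀ < δ → G x θ ≤ Uf δ x := by
    intro δ x θ hθ hd
    have hball : θ ∈ Metric.ball θ₀ δ := by rwa [Metric.mem_ball]
    have hcl : θ ∈ closure (D ∩ Metric.ball θ₀ δ) := by
      rw [mem_closure_iff_nhds]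
      intro t ht
      have ht' : t ∩ Metric.ball θ₀ δ ∈ 𝓝 θ :=
        Filter.inter_mem ht (Metric.isOpen_ball.mem_nhds hball)
      obtain ⟨p, hp1, hp2⟩ := (mem_closure_iff_nhds.1 (hDd hθ)) _ ht'
      exact ⟨p, ⟨hp1.1, hp2, hp1.2⟩⟩
    haveI : (𝓝[D ∩ Metric.ball θ₀ δ] θ).NeBot := mem_closure_iff_nhdsWithin_neBot.1 hcl
    have hct : ContinuousWithinAt (G x) (D ∩ Metric.ball θ₀ δ) θ :=
      (hGcont x θ hθ).mono (Set.inter_subset_left.trans hDΘ)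
    refine le_of_tendsto hct ?_
    filter_upwards [self_mem_nhdsWithin] with p hp
    exact le_ciSup (hbdd δ x) (⟨p, Set.mem_insert_of_mem _ hp⟩ : s δ)
  -- pointwise convergence as δ → 0
  have hUlim : ∀ x, Tendsto (fun m : ℕ => Uf (1/(m+1)) x) atTop (𝓝 (G x θ₀)) := by
    intro x
    rw [Metric.tendsto_atTop]
    intro η hη
    obtain ⟨δ₀, hδ₀, hmod⟩ := Metric.continuousWithinAt_iff.1 (hGcont x θ₀ hθ₀) (η/2)
      (half_pos hη)
    obtain ⟨M, hM⟩ := exists_nat_one_div_lt hδ₀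
    refine ⟨M, fun m hm => ?_⟩
    have hmm : (1:ℝ)/(m+1) ≤ 1/(M+1) := by
      apply div_le_div_of_nonneg_left _ (by positivity) _
      · norm_num
      · exact_mod_cast Nat.succ_le_succ hm
    have hsmall : (1:ℝ)/(m+1) < δ₀ := lt_of_le_of_lt hmm hM
    have hup : Uf (1/(m+1)) x ≤ G x θ₀ + η/2 := by
      haveI := (hsc (1/(m+1) : ℝ)).to_subtype
      haveI : Nonempty (s (1/(m+1) : ℝ)) := ⟨⟨θ₀, hθ₀s _⟩⟩
      apply ciSup_le
      rintro ⟨p, hp⟩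
      rcases hp with rfl | hp
      · linarith
      · have hpθ : p ∈ Θ := hDΘ hp.1
        have hpd : dist p θ₀ < δ₀ := lt_trans (Metric.mem_ball.1 hp.2) hsmall
        have := hmod hpθ hpd
        rw [Real.dist_eq] at this
        rw [abs_lt] at this
        linarith [this.2]
    have hlow := hUge (1/(m+1) : ℝ) x
    rw [Real.dist_eq, abs_lt]
    constructor <;> [linarith; linarith]
  -- integral convergence via dominated convergence
  have hint : Tendsto (fun m : ℕ => ∫ ω, Uf (1/(m+1)) (Y ω) ∂μ) atTop
      (𝓝 (∫ ω, G (Y ω) θ₀ ∂μ)) := by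
    apply tendsto_integral_of_dominated_convergence (fun ω => φ (Y ω))
    · exact fun m => ((hUmeas _).comp hY).aestronglyMeasurable
    · exact hφint
    · intro m
      filter_upwards with ω
      rw [Real.norm_eq_abs]
      exact hUabs _ _
    · filter_upwards with ω
      exact hUlim (Y ω)
  have hev : ∀ᶠ m : ℕ in atTop,
      dist (∫ ω, Uf (1/(m+1)) (Y ω) ∂μ) (∫ ω, G (Y ω) θ₀ ∂μ) < ε :=
    Metric.tendsto_nhds.1 hint ε hε
  obtain ⟨m, hm⟩ := hev.exists
  refine ⟨1/(m+1), by positivity, Uf (1/(m+1)), hUmeas _, hUabs _, hUdom _, ?_⟩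
  rw [Real.dist_eq, abs_lt] at hm
  linarith [hm.2]

end UET5

open UET UET2 UET3 UET4 UET5

/-- Lemma 1 (van der Plas): uniform strong law of large numbers for a stationary
ergodic process and a function continuous in the parameter over a compact set,
dominated by an integrable envelope. -/
theorem uniform_ergodic_theorem
    {Ω E V : Type*} [MeasurableSpace Ω]
    [NormedAddCommGroup E] [InnerProductSpace ℝ E] [FiniteDimensional ℝ E]
    [MeasurableSpace E] [BorelSpace E]
    [NormedAddCommGroup V] [InnerProductSpace ℝ V] [FiniteDimensional ℝ V]
    (μ : Measure Ω) [IsProbabilityMeasure μ]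
    (T : Ω → Ω) (hT : MeasurePreserving T μ μ) (hErg : Ergodic T μ)
    (X : ℕ → Ω → E) (hX0 : Measurable (X 0))
    (hshift : ∀ n ω, X (n+1) ω = X n (T ω))
    (Θ : Set V) (hΘc : IsCompact Θ) (hΘne : Θ.Nonempty)
    (F : E → V → ℝ)
    (hFmeas : ∀ θ ∈ Θ, Measurable fun x => F x θ)
    (hFcont : ∀ x : E, ContinuousOn (F x) Θ)
    (henv : Integrable (fun ω => ⨆ θ : Θ, |F (X 0 ω) (θ : V)|) μ) :
    ∀ᵐ ω ∂μ, Tendsto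
      (fun N : ℕ => ⨆ θ : Θ,
        |(1 / (N : ℝ)) * (∑ n ∈ Finset.range N, F (X n ω) (θ : V))
          - ∫ ω', F (X 0 ω') (θ : V) ∂μ|)
      atTop (nhds 0) := by
  classical
  haveI : Nonempty ↥Θ := hΘne.to_subtype
  -- the process is generated by iterates of T
  have hXn : ∀ n ω, X n ω = X 0 (T^[n] ω) := by
    intro n
    induction n with
    | zero => intro ω; rfl
    | succ n ih =>
        intro ω
        rw [hshift n ω, ih (T ω), Function.iterate_succ_apply]
  -- the envelope
  set φ : E → ℝ := fun x => ⨆ θ : Θ, |F x (θ : V)| with hφdef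
  have hφint : Integrable (fun ω => φ (X 0 ω)) μ := henv
  have hrange : ∀ x, ∀ θ ∈ Θ, |F x θ| ≤ φ x := by
    intro x θ hθ
    have hb : BddAbove (Set.range fun θ : Θ => |F x (θ : V)|) := by
      have hcomp : IsCompact ((fun θ => |F x θ|) '' Θ) :=
        hΘc.image_of_continuousOn (continuous_abs.comp_continuousOn (hFcont x))
      have := hcomp.bddAbove
      rwa [Set.image_eq_range] at this
    exact le_ciSup hb (⟨θ, hθ⟩ : Θ)
  have hφ0 : ∀ x, 0 ≤ φ x := by
    intro x
    obtain ⟨θ, hθ⟩ := hΘne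
    exact le_trans (abs_nonneg _) (hrange x θ hθ)
  -- integrability of compositions dominated by the envelope
  have hint_comp : ∀ h : E → ℝ, Measurable h → (∀ x, |h x| ≤ φ x) →
      Integrable (fun ω => h (X 0 ω)) μ := by
    intro h hm hb
    refine hφint.mono ((hm.comp hX0).aestronglyMeasurable) ?_
    filter_upwards with ω
    rw [Real.norm_eq_abs, Real.norm_eq_abs]
    exact (hb _).trans (le_abs_self _)
  have hFint : ∀ θ ∈ Θ, Integrable (fun ω => F (X 0 ω) θ) μ := by
    intro θ hθ
    refine hφint.mono (((hFmeas θ hθ).comp hX0).aestronglyMeasurable) ?_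
    filter_upwards with ω
    rw [Real.norm_eq_abs, Real.norm_eq_abs]
    exact (hrange _ θ hθ).trans (le_abs_self _)
  -- a countable dense subset of Θ
  obtain ⟨D', hD'c, hD'd⟩ := TopologicalSpace.exists_countable_dense (↥Θ)
  set D : Set V := Subtype.val '' D' with hDdef
  have hDc : D.Countable := hD'c.image _
  have hDΘ : D ⊆ Θ := by rintro _ ⟨p, _, rfl⟩; exact p.2
  have hDd : Θ ⊆ closure D := by
    intro θ hθ
    have h1 : (⟨θ, hθ⟩ : ↥Θ) ∈ closure D' := hD'd _
    exact image_closure_subset_closure_image continuous_subtype_val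
      (Set.mem_image_of_mem _ h1)
  -- two-sided brackets
  have hbracket : ∀ ε : ℝ, 0 < ε → ∀ θ₀ : Θ, ∃ δ > (0:ℝ), ∃ UU LL : E → ℝ,
      Measurable UU ∧ Measurable LL ∧ (∀ x, |UU x| ≤ φ x) ∧ (∀ x, |LL x| ≤ φ x) ∧
      (∀ x θ, θ ∈ Θ → dist θ (θ₀ : V) < δ → LL x ≤ F x θ ∧ F x θ ≤ UU x) ∧
      (∫ ω, UU (X 0 ω) ∂μ ≤ (∫ ω, F (X 0 ω) (θ₀ : V) ∂μ) + ε) ∧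
      ((∫ ω, F (X 0 ω) (θ₀ : V) ∂μ) - ε ≤ ∫ ω, LL (X 0 ω) ∂μ) := by
    intro ε hε θ₀
    obtain ⟨δ₁, hδ₁, U, hUm, hUabs, hUdom, hUint⟩ :=
      upper_bracket hX0 hDc hDΘ hDd hFmeas hFcont hrange hφint θ₀.2 hε
    obtain ⟨δ₂, hδ₂, U', hU'm, hU'abs, hU'dom, hU'int⟩ :=
      upper_bracket (G := fun x θ => -F x θ) hX0 hDc hDΘ hDd
        (fun θ hθ => (hFmeas θ hθ).neg) (fun x => (hFcont x).neg)
        (fun x θ hθ => by rw [abs_neg]; exact hrange x θ hθ) hφint θ₀.2 hε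
    refine ⟨min δ₁ δ₂, lt_min hδ₁ hδ₂, U, fun x => -U' x, hUm, hU'm.neg, hUabs,
      (fun x => by rw [abs_neg]; exact hU'abs x), ?_, hUint, ?_⟩
    · intro x θ hθ hd
      constructor
      · have := hU'dom x θ hθ (lt_of_lt_of_le hd (min_le_right _ _))
        show -U' x ≤ F x θ
        linarith
      · exact hUdom x θ hθ (lt_of_lt_of_le hd (min_le_left _ _))
    · have h1 : ∫ ω, (fun x => -U' x) (X 0 ω) ∂μ = -∫ ω, U' (X 0 ω) ∂μ := by
        simp only
        exact integral_neg _
      have h2 : ∫ ω, (fun x θ => -F x θ) (X 0 ω) (θ₀ : V) ∂μ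
          = -∫ ω, F (X 0 ω) (θ₀ : V) ∂μ := by
        simp only
        exact integral_neg _
      rw [h2] at hU'int
      rw [h1]
      linarith
  -- boundedness of the family appearing under the supremum
  have hsum_bound : ∀ (h : E → ℝ), (∀ x, |h x| ≤ φ x) → ∀ ω (N : ℕ),
      |(1/(N:ℝ)) * ∑ n ∈ Finset.range N, h (X n ω)|
        ≤ (1/(N:ℝ)) * ∑ n ∈ Finset.range N, φ (X n ω) := by
    intro h hb ω N
    rw [abs_mul, abs_of_nonneg (by positivity : (0:ℝ) ≤ 1/(N:ℝ))]
    apply mul_le_mul_of_nonneg_left _ (by positivity)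
    exact (Finset.abs_sum_le_sum_abs _ _).trans
      (Finset.sum_le_sum fun n _ => hb (X n ω))
  have hsupBdd : ∀ ω (N : ℕ), BddAbove (Set.range fun θ : Θ =>
      |(1/(N:ℝ)) * (∑ n ∈ Finset.range N, F (X n ω) (θ : V))
        - ∫ ω', F (X 0 ω') (θ : V) ∂μ|) := by
    intro ω N
    refine ⟨(1/(N:ℝ)) * ∑ n ∈ Finset.range N, φ (X n ω) + ∫ ω', φ (X 0 ω') ∂μ, ?_⟩
    rintro y ⟨θ, rfl⟩
    have h1 : |(1/(N:ℝ)) * ∑ n ∈ Finset.range N, F (X n ω) (θ : V)|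
        ≤ (1/(N:ℝ)) * ∑ n ∈ Finset.range N, φ (X n ω) :=
      hsum_bound (fun x => F x (θ : V)) (fun x => hrange x θ θ.2) ω N
    have h2 : |∫ ω', F (X 0 ω') (θ : V) ∂μ| ≤ ∫ ω', φ (X 0 ω') ∂μ := by
      have hnorm := norm_integral_le_integral_norm (μ := μ)
        (fun ω' => F (X 0 ω') (θ : V))
      simp only [Real.norm_eq_abs] at hnorm
      refine hnorm.trans ?_
      apply integral_mono ((hFint θ θ.2).abs) hφint
      intro ω'
      exact hrange _ θ θ.2
    calc |(1/(N:ℝ)) * (∑ n ∈ Finset.range N, F (X n ω) (θ : V))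
          - ∫ ω', F (X 0 ω') (θ : V) ∂μ|
        ≤ |(1/(N:ℝ)) * (∑ n ∈ Finset.range N, F (X n ω) (θ : V))|
          + |∫ ω', F (X 0 ω') (θ : V) ∂μ| := abs_sub _ _
      _ ≤ _ := add_le_add h1 h2
  -- the key quantitative step
  have key : ∀ ε : ℝ, 0 < ε → ∀ᵐ ω ∂μ, ∀ᶠ N : ℕ in atTop,
      (⨆ θ : Θ, |(1/(N:ℝ)) * (∑ n ∈ Finset.range N, F (X n ω) (θ : V))
        - ∫ ω', F (X 0 ω') (θ : V) ∂μ|) ≤ 3*ε := by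
    intro ε hε
    choose δ hδ UU LL hUm hLm hUabs hLabs hdom hUint hLint using hbracket ε hε
    have hcover : Θ ⊆ ⋃ θ₀ : Θ, Metric.ball (θ₀ : V) (δ θ₀) := fun θ hθ =>
      Set.mem_iUnion.2 ⟨⟨θ, hθ⟩, Metric.mem_ball_self (hδ _)⟩
    obtain ⟨t, ht⟩ := hΘc.elim_finite_subcover
      (fun θ₀ : Θ => Metric.ball (θ₀ : V) (δ θ₀)) (fun _ => Metric.isOpen_ball) hcover
    have hsum : ∀ (h : E → ℝ) ω (N : ℕ),
        ∑ n ∈ Finset.range N, h (X n ω) = ∑ n ∈ Finset.range N, h (X 0 (T^[n] ω)) :=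
      fun h ω N => Finset.sum_congr rfl (fun n _ => by rw [hXn n ω])
    have hB : ∀ i : ↥t, ∀ᵐ ω ∂μ,
        Tendsto (fun N : ℕ => (1/(N:ℝ)) * ∑ n ∈ Finset.range N, UU i (X n ω))
          atTop (𝓝 (∫ ω', UU i (X 0 ω') ∂μ)) ∧
        Tendsto (fun N : ℕ => (1/(N:ℝ)) * ∑ n ∈ Finset.range N, LL i (X n ω))
          atTop (𝓝 (∫ ω', LL i (X 0 ω') ∂μ)) := by
      intro i
      have h1 := UET4.birkhoff hErg ((hUm i).comp hX0) (hint_comp _ (hUm i) (hUabs i))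
      have h2 := UET4.birkhoff hErg ((hLm i).comp hX0) (hint_comp _ (hLm i) (hLabs i))
      filter_upwards [h1, h2] with ω h1 h2
      constructor
      · have he : (fun N : ℕ => (1/(N:ℝ)) * ∑ n ∈ Finset.range N, UU i (X n ω))
            = (fun N : ℕ => (1/(N:ℝ)) * ∑ n ∈ Finset.range N, UU i (X 0 (T^[n] ω))) := by
          funext N; rw [hsum]
        rw [he]; exact h1
      · have he : (fun N : ℕ => (1/(N:ℝ)) * ∑ n ∈ Finset.range N, LL i (X n ω))
            = (fun N : ℕ => (1/(N:ℝ)) * ∑ n ∈ Finset.range N, LL i (X 0 (T^[n] ω))) := by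
          funext N; rw [hsum]
        rw [he]; exact h2
    filter_upwards [ae_all_iff.2 hB] with ω hω
    have hev : ∀ᶠ N : ℕ in atTop, ∀ i : ↥t,
        dist ((1/(N:ℝ)) * ∑ n ∈ Finset.range N, UU i (X n ω)) (∫ ω', UU i (X 0 ω') ∂μ) < ε ∧
        dist ((1/(N:ℝ)) * ∑ n ∈ Finset.range N, LL i (X n ω)) (∫ ω', LL i (X 0 ω') ∂μ) < ε := by
      rw [eventually_all]
      intro i
      exact (Metric.tendsto_nhds.1 (hω i).1 ε hε).and (Metric.tendsto_nhds.1 (hω i).2 ε hε)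
    filter_upwards [hev] with N hN
    apply ciSup_le
    intro θ
    obtain ⟨i, hit, hball⟩ := Set.mem_iUnion₂.1 (ht θ.2)
    have hdist : dist (θ : V) (i : V) < δ i := Metric.mem_ball.1 hball
    obtain ⟨hU, hL⟩ := hN ⟨i, hit⟩
    rw [Real.dist_eq, abs_lt] at hU hL
    -- pointwise comparisons of the averages
    have hAU : (1/(N:ℝ)) * ∑ n ∈ Finset.range N, F (X n ω) (θ : V)
        ≤ (1/(N:ℝ)) * ∑ n ∈ Finset.range N, UU i (X n ω) := by
      apply mul_le_mul_of_nonneg_left _ (by positivity)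
      exact Finset.sum_le_sum fun n _ => (hdom i (X n ω) θ θ.2 hdist).2
    have hAL : (1/(N:ℝ)) * ∑ n ∈ Finset.range N, LL i (X n ω)
        ≤ (1/(N:ℝ)) * ∑ n ∈ Finset.range N, F (X n ω) (θ : V) := by
      apply mul_le_mul_of_nonneg_left _ (by positivity)
      exact Finset.sum_le_sum fun n _ => (hdom i (X n ω) θ θ.2 hdist).1
    -- integral comparisons
    have hIL : ∫ ω', LL i (X 0 ω') ∂μ ≤ ∫ ω', F (X 0 ω') (θ : V) ∂μ :=
      integral_mono (hint_comp _ (hLm i) (hLabs i)) (hFint θ θ.2)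
        (fun ω' => (hdom i (X 0 ω') θ θ.2 hdist).1)
    have hIU : ∫ ω', F (X 0 ω') (θ : V) ∂μ ≤ ∫ ω', UU i (X 0 ω') ∂μ :=
      integral_mono (hFint θ θ.2) (hint_comp _ (hUm i) (hUabs i))
        (fun ω' => (hdom i (X 0 ω') θ θ.2 hdist).2)
    have h6 := hUint i
    have h7 := hLint i
    rw [abs_le]
    constructor <;> [skip; skip]
    · linarith [hL.1, hAL, hIU, h6, h7]
    · linarith [hU.2, hAU, hIL, h6, h7]
  -- conclusion
  have hk : ∀ k : ℕ, ∀ᵐ ω ∂μ, ∀ᶠ N : ℕ in atTop,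
      (⨆ θ : Θ, |(1/(N:ℝ)) * (∑ n ∈ Finset.range N, F (X n ω) (θ : V))
        - ∫ ω', F (X 0 ω') (θ : V) ∂μ|) ≤ 3*(1/(k+1)) :=
    fun k => key _ (by positivity)
  filter_upwards [ae_all_iff.2 hk] with ω hω
  rw [Metric.tendsto_atTop]
  intro η hη
  obtain ⟨k, hkη⟩ := exists_nat_one_div_lt (by linarith : (0:ℝ) < η/3)
  obtain ⟨N₀, hN₀⟩ := eventually_atTop.1 (hω k)
  refine ⟨N₀, fun N hN => ?_⟩
  have h1 := hN₀ N hN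
  have h0 : 0 ≤ ⨆ θ : Θ, |(1/(N:ℝ)) * (∑ n ∈ Finset.range N, F (X n ω) (θ : V))
      - ∫ ω', F (X 0 ω') (θ : V) ∂μ| := by
    obtain ⟨θ, hθ⟩ := hΘne
    exact le_trans (abs_nonneg _) (le_ciSup (hsupBdd ω N) (⟨θ, hθ⟩ : Θ))
  rw [Real.dist_eq, sub_zero, abs_of_nonneg h0]
  calc (⨆ θ : Θ, |(1/(N:ℝ)) * (∑ n ∈ Finset.range N, F (X n ω) (θ : V))
        - ∫ ω', F (X 0 ω') (θ : V) ∂μ|) ≤ 3*(1/(k+1)) := h1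
    _ < η := by
        have : (1:ℝ)/(k+1) < η/3 := hkη
        linarith
end
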